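/- arXiv:1801.04079 — 4 statements merged into one kernel-verified Lean document; each statement's English description precedes it below -/
import Mathlib

section
/- Define the real bilinear form ω(u,v) = Re((conj u)ᵀ · (i·σ₃·v)) on ℂ². Let a, b ∈ ℂ with |a|² + |b|² = 1 and set T(u) = a·u + b·σ₂·conj(u). Then ω(T(u), T(v)) = ω(u, v) for all u, v ∈ ℂ². -/
open Complex

noncomputable section

/-- Componentwise complex conjugation on ℂ². -/
def conj2 (u : ℂ × ℂ) : ℂ × ℂ := ((starRingEnd ℂ) u.1, (starRingEnd ℂ) u.2)

/-- The action of the second Pauli matrix σ₂ = [[0,-i],[i,0]] on ℂ². -/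
def s2 (u : ℂ × ℂ) : ℂ × ℂ := (-I * u.2, I * u.1)

/-- The action of the third Pauli matrix σ₃ = [[1,0],[0,-1]] on ℂ². -/
def s3 (u : ℂ × ℂ) : ℂ × ℂ := (u.1, -u.2)

/-- The ℝ-linear map J(u) = σ₂ · conj(u). -/
def Jmap (u : ℂ × ℂ) : ℂ × ℂ := s2 (conj2 u)

/-- The pairing ⟨v, w⟩ = Re((conj v)ᵀ · w) on ℂ². -/
def pair (v w : ℂ × ℂ) : ℝ := ((starRingEnd ℂ) v.1 * w.1 + (starRingEnd ℂ) v.2 * w.2).re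

/-- The real bilinear form ω(u,v) = Re((conj u)ᵀ · (i·σ₃·v)). -/
def omegaForm (u v : ℂ × ℂ) : ℝ := pair u (I • s3 v)

/-- If |a|²+|b|² = 1 and T(u) = a·u + b·σ₂·conj(u), then ω(T u, T v) = ω(u,v). -/
theorem stmt_4 (a b : ℂ) (hab : ‖a‖ ^ 2 + ‖b‖ ^ 2 = 1) :
    ∀ u v : ℂ × ℂ,
      omegaForm (a • u + b • Jmap u) (a • v + b • Jmap v) = omegaForm u v := by
  intro u v
  have h : a.re^2 + a.im^2 + (b.re^2 + b.im^2) = 1 := by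
    have := hab
    rw [Complex.sq_norm, Complex.sq_norm, Complex.normSq_apply, Complex.normSq_apply] at this
    linarith
  obtain ⟨u1, u2⟩ := u
  obtain ⟨v1, v2⟩ := v
  simp only [omegaForm, pair, Jmap, s2, s3, conj2, Prod.smul_fst, Prod.smul_snd,
    Prod.fst_add, Prod.snd_add, smul_eq_mul, Prod.mk.injEq, map_add, map_mul,
    Complex.add_re, Complex.mul_re, Complex.mul_im, Complex.add_im,
    Complex.conj_re, Complex.conj_im, Complex.I_re, Complex.I_im,
    Complex.neg_re, Complex.neg_im]
  linear_combination (-(u1.re*v1.im) + u1.im*v1.re + u2.re*v2.im - u2.im*v2.re) * h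
end
end

section
/- For u ∈ ℂ² define q₅(u) = Re((conj(σ₃σ₂·conj u))ᵀ · u), q₆(u) = Re((conj(i·σ₃σ₂·conj u))ᵀ · u), and q₇(u) = Re((conj(σ₃·u))ᵀ · u). Let b ∈ ℂ with |b| ≤ 1, write b_R = Re b, b_I = Im b, s = √(1-|b|²), and set u = s·ψ + b·σ₂·conj(ψ) for ψ ∈ ℂ². Then q₅(u) = (1 - 2b_R²)·q₅(ψ) - 2·b_I·b_R·q₆(ψ) - 2·s·b_R·q₇(ψ). -/
open Complex

noncomputable section

/-- q₅(u) = Re((conj(σ₃σ₂·conj u))ᵀ · u). -/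
def q5 (u : ℂ × ℂ) : ℝ := pair (s3 (s2 (conj2 u))) u

/-- q₆(u) = Re((conj(i·σ₃σ₂·conj u))ᵀ · u). -/
def q6 (u : ℂ × ℂ) : ℝ := pair (I • s3 (s2 (conj2 u))) u

/-- q₇(u) = Re((conj(σ₃·u))ᵀ · u). -/
def q7 (u : ℂ × ℂ) : ℝ := pair (s3 u) u

/-- Transformation law of q₅ under u = s·ψ + b·σ₂·conj ψ. -/
theorem stmt_9 (b : ℂ) (hb : ‖b‖ ≤ 1) (ψ : ℂ × ℂ) (s : ℝ)
    (hs : s = Real.sqrt (1 - ‖b‖ ^ 2))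
    (u : ℂ × ℂ) (hu : u = (s : ℂ) • ψ + b • Jmap ψ) :
    q5 u = (1 - 2 * b.re ^ 2) * q5 ψ - 2 * b.im * b.re * q6 ψ - 2 * s * b.re * q7 ψ := by
  have hs2 : s ^ 2 = 1 - b.re ^ 2 - b.im ^ 2 := by
    have h1 : (0:ℝ) ≤ 1 - ‖b‖ ^ 2 := by nlinarith [norm_nonneg b]
    have := Real.sq_sqrt h1
    rw [hs]
    rw [this, Complex.sq_norm, Complex.normSq_apply]
    ring
  have key : q5 u = s ^ 2 * q5 ψ - (b.re ^ 2 - b.im ^ 2) * q5 ψ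
      - 2 * b.re * b.im * q6 ψ - 2 * s * b.re * q7 ψ := by
    subst hu
    simp only [q5, q6, q7, pair, Jmap, s2, s3, conj2, Prod.fst_add, Prod.snd_add,
      Prod.smul_fst, Prod.smul_snd, smul_eq_mul, map_add, map_mul, map_neg,
      Complex.conj_conj, Complex.conj_I, Complex.conj_ofReal,
      Complex.add_re, Complex.mul_re, Complex.mul_im, Complex.add_im,
      Complex.neg_re, Complex.neg_im, Complex.I_re, Complex.I_im,
      Complex.ofReal_re, Complex.ofReal_im, Complex.conj_re, Complex.conj_im]
    ring
  rw [key]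
  linear_combination (q5 ψ) * hs2
end
end

section
/- With q₅, q₆, q₇ as defined (q₅(u) = Re((conj(σ₃σ₂·conj u))ᵀu), q₆(u) = Re((conj(iσ₃σ₂·conj u))ᵀu), q₇(u) = Re((conj(σ₃u))ᵀu)), let b ∈ ℂ with |b| ≤ 1, b_R = Re b, b_I = Im b, s = √(1-|b|²), and u = s·ψ + b·σ₂·conj(ψ). Then q₇(u) = 2·s·b_R·q₅(ψ) + 2·s·b_I·q₆(ψ) + (1 - 2|b|²)·q₇(ψ). -/
open Complex

noncomputable section

/-- Transformation law of q₇ under u = s·ψ + b·σ₂·conj ψ. -/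
theorem stmt_10 (b : ℂ) (hb : ‖b‖ ≤ 1) (ψ : ℂ × ℂ) (s : ℝ)
    (hs : s = Real.sqrt (1 - ‖b‖ ^ 2))
    (u : ℂ × ℂ) (hu : u = (s : ℂ) • ψ + b • Jmap ψ) :
    q7 u = 2 * s * b.re * q5 ψ + 2 * s * b.im * q6 ψ + (1 - 2 * ‖b‖ ^ 2) * q7 ψ := by
  have habs : ‖b‖ ^ 2 = b.re ^ 2 + b.im ^ 2 := by
    rw [Complex.sq_norm, Complex.normSq_apply]; ring
  have hs2 : s ^ 2 = 1 - (b.re ^ 2 + b.im ^ 2) := by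
    rw [hs, Real.sq_sqrt (by nlinarith [norm_nonneg b])]; rw [habs]
  subst hu
  simp only [q5, q6, q7, pair, s2, s3, conj2, Jmap, Prod.fst_add, Prod.snd_add, Prod.smul_fst,
    Prod.smul_snd, smul_eq_mul, map_add, map_mul, map_neg, Complex.add_re, Complex.mul_re,
    Complex.mul_im, Complex.conj_re, Complex.conj_im, Complex.I_re, Complex.I_im,
    Complex.neg_re, Complex.neg_im, Complex.ofReal_re, Complex.ofReal_im, Complex.add_im,
    map_ofNat, Complex.conj_conj, habs]
  ring_nf
  nlinarith [hs2, sq_nonneg s]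
end
end

section
/- Let n ∈ ℕ, let e ∈ ℝⁿ with 0 < eₗ < ω for all l, where ω > 0. For multi-indices μ, ν ∈ ℕⁿ write (μ',ν') < (μ,ν) if (μ',ν') ≠ (μ,ν), μ'ₗ ≤ μₗ and ν'ₗ ≤ νₗ for all l. Suppose (μ,ν) satisfies |e·(μ-ν)| > ω and |e·(μ'-ν')| < ω for every (μ',ν') < (μ,ν). Then μ = 0 or ν = 0. -/
open Finset

/-- If 0 < eₗ < ω for all l, and (μ,ν) satisfies |e·(μ-ν)| > ω while every strictly
smaller pair (μ',ν') (componentwise ≤, not equal) satisfies |e·(μ'-ν')| < ω,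
then μ = 0 or ν = 0. -/
theorem stmt_12 (n : ℕ) (e : Fin n → ℝ) (ω : ℝ) (hω : 0 < ω)
    (he : ∀ l, 0 < e l ∧ e l < ω) (μ ν : Fin n → ℕ)
    (h1 : |∑ l, e l * ((μ l : ℝ) - (ν l : ℝ))| > ω)
    (h2 : ∀ μ' ν' : Fin n → ℕ,
      (μ', ν') ≠ (μ, ν) → (∀ l, μ' l ≤ μ l) → (∀ l, ν' l ≤ ν l) →
      |∑ l, e l * ((μ' l : ℝ) - (ν' l : ℝ))| < ω) :
    μ = 0 ∨ ν = 0 := by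
  by_contra h
  push_neg at h
  obtain ⟨hμ, hν⟩ := h
  obtain ⟨i, hi⟩ := Function.ne_iff.mp hμ
  obtain ⟨j, hj⟩ := Function.ne_iff.mp hν
  simp only [Pi.zero_apply] at hi hj
  have hi1 : 1 ≤ μ i := Nat.one_le_iff_ne_zero.mpr hi
  have hj1 : 1 ≤ ν j := Nat.one_le_iff_ne_zero.mpr hj
  rcases lt_abs.mp h1 with hS | hS
  · -- S > ω : decrement ν at j
    set ν' : Fin n → ℕ := Function.update ν j (ν j - 1) with hν'
    have hne : (μ, ν') ≠ (μ, ν) := by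
      intro hEq
      have : ν' j = ν j := congrFun (congrArg Prod.snd hEq) j
      simp only [hν', Function.update_self] at this
      omega
    have hle2 : ∀ l, ν' l ≤ ν l := by
      intro l
      by_cases hl : l = j
      · subst hl; simp [hν']
      · simp [hν', hl]
    have key : ∑ l, e l * ((μ l : ℝ) - (ν' l : ℝ))
        = (∑ l, e l * ((μ l : ℝ) - (ν l : ℝ))) + e j := by
      have : ∀ l ∈ Finset.univ, e l * ((μ l : ℝ) - (ν' l : ℝ))
          = e l * ((μ l : ℝ) - (ν l : ℝ)) + (if l = j then e j else 0) := by
        intro l _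
        by_cases hl : l = j
        · subst hl
          have : ((ν' l : ℕ) : ℝ) = (ν l : ℝ) - 1 := by
            simp only [hν', Function.update_self]
            push_cast [Nat.cast_sub hj1]
            ring
          rw [this]; simp; ring
        · simp [hν', hl]
      rw [Finset.sum_congr rfl this, Finset.sum_add_distrib,
        Finset.sum_ite_eq' Finset.univ j (fun _ => e j)]
      simp
    have hlt := h2 μ ν' hne (fun l => le_refl _) hle2
    rw [key] at hlt
    have : ω < (∑ l, e l * ((μ l : ℝ) - (ν l : ℝ))) + e j :=
      lt_trans hS (by linarith [(he j).1])
    have := le_abs_self ((∑ l, e l * ((μ l : ℝ) - (ν l : ℝ))) + e j)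
    linarith
  · -- S < -ω : decrement μ at i
    set μ' : Fin n → ℕ := Function.update μ i (μ i - 1) with hμ'
    have hne : (μ', ν) ≠ (μ, ν) := by
      intro hEq
      have : μ' i = μ i := congrFun (congrArg Prod.fst hEq) i
      simp only [hμ', Function.update_self] at this
      omega
    have hle1 : ∀ l, μ' l ≤ μ l := by
      intro l
      by_cases hl : l = i
      · subst hl; simp [hμ']
      · simp [hμ', hl]
    have key : ∑ l, e l * ((μ' l : ℝ) - (ν l : ℝ))
        = (∑ l, e l * ((μ l : ℝ) - (ν l : ℝ))) - e i := by
      have : ∀ l ∈ Finset.univ, e l * ((μ' l : ℝ) - (ν l : ℝ))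
          = e l * ((μ l : ℝ) - (ν l : ℝ)) - (if l = i then e i else 0) := by
        intro l _
        by_cases hl : l = i
        · subst hl
          have : ((μ' l : ℕ) : ℝ) = (μ l : ℝ) - 1 := by
            simp only [hμ', Function.update_self]
            push_cast [Nat.cast_sub hi1]
            ring
          rw [this]; simp; ring
        · simp [hμ', hl]
      rw [Finset.sum_congr rfl this, Finset.sum_sub_distrib,
        Finset.sum_ite_eq' Finset.univ i (fun _ => e i)]
      simp
    have hlt := h2 μ' ν hne hle1 (fun l => le_refl _)
    rw [key] at hlt
    have := neg_le_abs ((∑ l, e l * ((μ l : ℝ) - (ν l : ℝ))) - e i)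
    have hei := (he i).1
    rw [abs_lt] at hlt
    linarith
end
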